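/- In A_g(V), if u ∈ V^{r*} with r ≠ 0 (eigenvalue e^{2πir/T} of gσ), then u ∈ O_g(V); hence A_g(V) is a quotient of V^{0*}/(O_g(V) ∩ V^{0*}). -/

import Mathlib

open Complex DirectSum
open scoped Classical

noncomputable section

/-- Generalized binomial coefficient `x choose i` for `x : ℚ`. -/
def qchoose (x : ℚ) (i : ℕ) : ℚ := (∏ j ∈ Finset.range i, (x - j)) / (Nat.factorial i)

/-- The super-sign `(-1)^{p(u)p(v)}` read off from the weights `p, q` of homogeneous
vectors: it is `-1` exactly when both weights are non-integral (both vectors odd). -/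
def epsQ (p q : ℚ) : ℂ :=
  if (¬ ∃ a : ℤ, (a : ℚ) = p) ∧ (¬ ∃ b : ℤ, (b : ℚ) = q) then -1 else 1

/-- A vertex operator superalgebra, presented by its modes `Y u n` (for `n : ℤ`),
vacuum, conformal vector, and `½ℤ`-grading by weight spaces, together with the usual
axioms (truncation, vacuum/creation, `L(0)`-grading, `L(-1)`-translation and the
Borcherds/Jacobi identity with super-signs). -/
structure VOSA (V : Type) [AddCommGroup V] [Module ℂ V] where
  Y : V → ℤ → Module.End ℂ V
  vac : V
  ω : V
  wtSpace : ℚ → Submodule ℂ V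
  halfInt : ∀ n : ℚ, wtSpace n ≠ ⊥ → ∃ m : ℤ, n = (m : ℚ) / 2
  lowerBound : ∃ N : ℚ, ∀ n < N, wtSpace n = ⊥
  grading : DirectSum.IsInternal wtSpace
  fin_dim : ∀ n : ℚ, FiniteDimensional ℂ (wtSpace n)
  trunc : ∀ u v : V, ∃ N : ℤ, ∀ n ≥ N, Y u n v = 0
  vacuum_op : ∀ n : ℤ, Y vac n = if n = -1 then LinearMap.id else 0
  creation : ∀ v : V, Y v (-1) vac = v
  creation' : ∀ (v : V) (n : ℤ), 0 ≤ n → Y v n vac = 0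
  omega_wt : ω ∈ wtSpace 2
  vac_wt : vac ∈ wtSpace 0
  L0_grading : ∀ (p : ℚ) (v : V), v ∈ wtSpace p → Y ω 1 v = (p : ℂ) • v
  translation : ∀ (u : V) (n : ℤ), Y (Y ω 0 u) n = (-(n : ℂ)) • Y u (n - 1)
  mode_wt : ∀ (p q : ℚ) (u v : V) (n : ℤ), u ∈ wtSpace p → v ∈ wtSpace q →
    Y u n v ∈ wtSpace (p + q - n - 1)
  borcherds : ∀ (p q : ℚ) (u v w : V), u ∈ wtSpace p → v ∈ wtSpace q →
    ∀ m n k : ℤ,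
      ∑ᶠ i : ℕ, ((qchoose (m : ℚ) i : ℚ) : ℂ) • Y (Y u (k + (i : ℤ)) v) (m + n - (i : ℤ)) w =
      ∑ᶠ i : ℕ, ((-1 : ℂ) ^ i * ((qchoose (k : ℚ) i : ℚ) : ℂ)) •
        (Y u (m + k - (i : ℤ)) (Y v (n + (i : ℤ)) w)
          - ((-1 : ℂ) ^ k * epsQ p q) • Y v (k + n - (i : ℤ)) (Y u (m + (i : ℤ)) w))

variable {V : Type} [AddCommGroup V] [Module ℂ V]

namespace VOSA

/-- The even part `V_{\bar 0} = ⊕_{n ∈ ℤ} V_n`. -/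
def evenPart (A : VOSA V) : Submodule ℂ V := ⨆ n : ℤ, A.wtSpace (n : ℚ)

/-- The odd part `V_{\bar 1} = ⊕_{n ∈ ½+ℤ} V_n`. -/
def oddPart (A : VOSA V) : Submodule ℂ V := ⨆ n : ℤ, A.wtSpace ((n : ℚ) + 1/2)

/-- `L(0) = ω_1`. -/
def L0 (A : VOSA V) : Module.End ℂ V := A.Y A.ω 1

/-- `L(-1) = ω_0`. -/
def Lm1 (A : VOSA V) : Module.End ℂ V := A.Y A.ω 0

/-- An automorphism of a vertex operator superalgebra: a linear automorphism
preserving `ω` and compatible with all vertex operator modes. -/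
structure Aut (A : VOSA V) where
  g : V ≃ₗ[ℂ] V
  fix_omega : g A.ω = A.ω
  equivariant : ∀ (u : V) (n : ℤ) (v : V), g (A.Y u n v) = A.Y (g u) n (g v)

/-- The canonical parity involution property: identity on the even part,
minus identity on the odd part. -/
def IsParityAut (A : VOSA V) (s : Aut A) : Prop :=
  (∀ v ∈ A.evenPart, s.g v = v) ∧ (∀ v ∈ A.oddPart, s.g v = -v)

end VOSA

/-- The `e^{2πir/T}`-eigenspace of a linear automorphism. -/
def eigSp (f : V ≃ₗ[ℂ] V) (T r : ℕ) : Submodule ℂ V :=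
  Module.End.eigenspace (f.toLinearMap) (Complex.exp (2 * Real.pi * Complex.I * r / T))

def deltaR (r : ℕ) : ℚ := if r = 0 then 1 else 0

/-- `u ∘_g v = Res_z (1+z)^{wt u - 1 + δ_r + r/T} z^{-1-δ_r} Y(u,z)v`, in mode form,
for `u` homogeneous of weight `p` lying in the `gσ`-eigenspace with index `r`. -/
def circGElem (A : VOSA V) (T r : ℕ) (p : ℚ) (u v : V) : V :=
  ∑ᶠ i : ℕ, ((qchoose (p - 1 + deltaR r + (r : ℚ) / T) i : ℚ) : ℂ) •
    A.Y u ((i : ℤ) - 1 - (if r = 0 then 1 else 0)) v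

/-- `O_g(V)`: the span of all `u ∘_g v`. -/
def Og (A : VOSA V) (gs : V ≃ₗ[ℂ] V) (T : ℕ) : Submodule ℂ V :=
  Submodule.span ℂ {x | ∃ (r : ℕ) (p : ℚ) (u v : V), r < T ∧
    u ∈ eigSp gs T r ∧ u ∈ A.wtSpace p ∧ x = circGElem A T r p u v}

/-- `u * v = Res_z (1+z)^{wt u} z^{-1} Y(u,z)v` for `u` homogeneous of weight `p`. -/
def starElem (A : VOSA V) (p : ℚ) (u v : V) : V :=
  ∑ᶠ i : ℕ, ((qchoose p i : ℚ) : ℂ) • A.Y u ((i : ℤ) - 1) v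

/-- `u ∘ v = Res_z (1+z)^{wt u} z^{-2} Y(u,z)v` for `u` homogeneous of weight `p`. -/
def circElem (A : VOSA V) (p : ℚ) (u v : V) : V :=
  ∑ᶠ i : ℕ, ((qchoose p i : ℚ) : ℂ) • A.Y u ((i : ℤ) - 2) v

/-- `O(S)` for a subalgebra `S` (e.g. `V^{0*}`): span of `a ∘ b`, `a, b ∈ S`. -/
def Osub (A : VOSA V) (S : Submodule ℂ V) : Submodule ℂ V :=
  Submodule.span ℂ {x | ∃ (p : ℚ) (u v : V), u ∈ S ∧ u ∈ A.wtSpace p ∧ v ∈ S ∧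
    x = circElem A p u v}

/-- The projection of `V` onto the weight-`p` subspace coming from the internal
direct sum decomposition `V = ⊕ V_n`. -/
def projWt (A : VOSA V) (p : ℚ) : V →ₗ[ℂ] V :=
  (A.wtSpace p).subtype ∘ₗ (DirectSum.component ℂ ℚ (fun q => ↥(A.wtSpace q)) p) ∘ₗ
    (LinearEquiv.ofBijective (DirectSum.coeLinearMap A.wtSpace) A.grading).symm.toLinearMap

/-- A weak `g`-twisted module over a vertex operator superalgebra `A`, where `g`
has order `T₀`: modes `YM u n` for `n : ℚ`, supported on `r/T₀ + ℤ` for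
`u ∈ V^r`, with truncation, vacuum and the twisted Borcherds/Jacobi identity. -/
structure TwMod (A : VOSA V) (g : VOSA.Aut A) (T₀ : ℕ) (M : Type)
    [AddCommGroup M] [Module ℂ M] where
  YM : V → ℚ → M →ₗ[ℂ] M
  supp : ∀ (r : ℕ), r < T₀ → ∀ u ∈ eigSp g.g T₀ r, ∀ n : ℚ,
    (¬ ∃ m : ℤ, n = (m : ℚ) + (r : ℚ) / T₀) → YM u n = 0
  trunc : ∀ (u : V) (w : M), ∃ N : ℚ, ∀ n ≥ N, YM u n w = 0
  vac_act : ∀ n : ℚ, YM A.vac n = if n = -1 then LinearMap.id else 0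
  tw_borcherds : ∀ (r : ℕ) (p q : ℚ) (u v : V) (w : M),
    u ∈ eigSp g.g T₀ r → u ∈ A.wtSpace p → v ∈ A.wtSpace q →
    ∀ (m n : ℚ) (k : ℤ), (∃ a : ℤ, m = (a : ℚ) + (r : ℚ) / T₀) →
      ∑ᶠ i : ℕ, ((qchoose m i : ℚ) : ℂ) • YM (A.Y u (k + (i : ℤ)) v) (m + n - (i : ℚ)) w =
      ∑ᶠ i : ℕ, ((-1 : ℂ) ^ i * ((qchoose (k : ℚ) i : ℚ) : ℂ)) •
        (YM u (m + (k : ℚ) - (i : ℚ)) (YM v (n + (i : ℚ)) w)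
          - ((-1 : ℂ) ^ k * epsQ p q) • YM v ((k : ℚ) + n - (i : ℚ)) (YM u (m + (i : ℚ)) w))

/-- The space of lowest weight vectors
`Ω(M) = {w : u_{wt u + n} w = 0 for all homogeneous u and n ≥ 0}`. -/
def OmegaSet (A : VOSA V) {g : VOSA.Aut A} {T₀ : ℕ} {M : Type}
    [AddCommGroup M] [Module ℂ M] (W : TwMod A g T₀ M) : Set M :=
  {w | ∀ (p : ℚ) (u : V), u ∈ A.wtSpace p → ∀ m : ℚ, p ≤ m → W.YM u m w = 0}

/-- The zero-mode `o(a) = a_{wt a - 1}`, extended linearly to all of `V`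
via the projections to homogeneous components. -/
def oMode (A : VOSA V) {g : VOSA.Aut A} {T₀ : ℕ} {M : Type}
    [AddCommGroup M] [Module ℂ M] (W : TwMod A g T₀ M) (a : V) (w : M) : M :=
  ∑ᶠ p : ℚ, W.YM (projWt A p a) (p - 1) w

/-- An admissible `g`-twisted module: a weak `g`-twisted module with a
`(1/T)ℤ₊`-grading compatible with the mode actions. -/
structure AdmTwMod (A : VOSA V) (g : VOSA.Aut A) (T₀ T : ℕ) (M : Type)
    [AddCommGroup M] [Module ℂ M] extends TwMod A g T₀ M where
  gr : ℚ → Submodule ℂ M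
  gr_internal : DirectSum.IsInternal gr
  gr_supp : ∀ n : ℚ, gr n ≠ ⊥ → ∃ a : ℕ, n = (a : ℚ) / T
  gr_compat : ∀ (p : ℚ) (v : V), v ∈ A.wtSpace p → ∀ (m n : ℚ) (w : M),
    w ∈ gr n → YM v m w ∈ gr (n + p - m - 1)

/-- A submodule invariant under all twisted modes. -/
def TwMod.Invariant {A : VOSA V} {g : VOSA.Aut A} {T₀ : ℕ} {M : Type}
    [AddCommGroup M] [Module ℂ M] (W : TwMod A g T₀ M) (N : Submodule ℂ M) : Prop :=
  ∀ (u : V) (m : ℚ), ∀ w ∈ N, W.YM u m w ∈ N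

/-- A graded submodule: one which is the sum of its graded pieces. -/
def AdmTwMod.IsGraded {A : VOSA V} {g : VOSA.Aut A} {T₀ T : ℕ} {M : Type}
    [AddCommGroup M] [Module ℂ M] (W : AdmTwMod A g T₀ T M) (N : Submodule ℂ M) : Prop :=
  N = ⨆ n : ℚ, N ⊓ W.gr n

/-- A simple admissible twisted module: nonzero, and `0`, `M` are the only
graded invariant submodules. -/
def AdmTwMod.IsSimple {A : VOSA V} {g : VOSA.Aut A} {T₀ T : ℕ} {M : Type}
    [AddCommGroup M] [Module ℂ M] (W : AdmTwMod A g T₀ T M) : Prop :=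
  (⊥ : Submodule ℂ M) ≠ ⊤ ∧
  ∀ N : Submodule ℂ M, W.toTwMod.Invariant N → W.IsGraded N → N = ⊥ ∨ N = ⊤

/-- An isomorphism of twisted modules. -/
structure TwIso {A : VOSA V} {g : VOSA.Aut A} {T₀ T : ℕ} {M N : Type}
    [AddCommGroup M] [Module ℂ M] [AddCommGroup N] [Module ℂ N]
    (W : AdmTwMod A g T₀ T M) (X : AdmTwMod A g T₀ T N) where
  e : M ≃ₗ[ℂ] N
  comm : ∀ (u : V) (n : ℚ) (w : M), e (W.YM u n w) = X.YM u n (e w)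

/-- A bundled admissible `g`-twisted module. -/
structure AdmBundle (A : VOSA V) (g : VOSA.Aut A) (T₀ T : ℕ) where
  M : Type
  [acg : AddCommGroup M]
  [mod : Module ℂ M]
  str : AdmTwMod A g T₀ T M

attribute [instance] AdmBundle.acg AdmBundle.mod

/-- The space `L(V,g) ⊂ ℂ[t^{1/T₀},t^{-1/T₀}] ⊗ V`, modelled as finitely supported
functions `ℚ →₀ V`: the component at `n + r/T₀` must lie in `V^r`. -/
def LVgSet (A : VOSA V) (g : VOSA.Aut A) (T₀ : ℕ) : Set (ℚ →₀ V) :=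
  {f | ∀ m : ℚ, f m ≠ 0 → ∃ (a : ℤ) (r : ℕ), r < T₀ ∧ m = (a : ℚ) + (r : ℚ) / T₀ ∧
    f m ∈ eigSp g.g T₀ r}

/-- The operator `D = d/dt ⊗ 1 + 1 ⊗ L(-1)` on `ℂ[t^{1/T₀},t^{-1/T₀}] ⊗ V`,
sending `t^q ⊗ a` to `q t^{q-1} ⊗ a + t^q ⊗ L(-1)a`. -/
def Dop (A : VOSA V) (f : ℚ →₀ V) : ℚ →₀ V :=
  f.sum fun q a => (q : ℂ) • Finsupp.single (q - 1) a + Finsupp.single q (A.Y A.ω 0 a)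

/-- The subspace `D L(V,g)` (its span). -/
def DLsub (A : VOSA V) (g : VOSA.Aut A) (T₀ : ℕ) : Submodule ℂ (ℚ →₀ V) :=
  Submodule.span ℂ (Dop A '' LVgSet A g T₀)

/-- The `0`-th product on `L(V)`: `(t^q ⊗ a)_0 (t^{q'} ⊗ b) = Σ_i C(q,i) t^{q+q'-i} ⊗ a_i b`,
whose descent to `V[g] = L(V,g)/DL(V,g)` is the Lie superbracket. -/
def mode0 (A : VOSA V) (f h : ℚ →₀ V) : ℚ →₀ V :=
  f.sum fun q a => h.sum fun q' b =>
    ∑ᶠ i : ℕ, ((qchoose q i : ℚ) : ℂ) • Finsupp.single (q + q' - (i : ℚ)) (A.Y a (i : ℤ) b)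

/-- The lift `o(a) = a(wt a - 1) = Σ_p t^{p-1} ⊗ (proj_p a)` of the map
`V^{0*} → V[g]_0`. -/
def oLift (A : VOSA V) (a : V) : ℚ →₀ V :=
  ∑ᶠ p : ℚ, Finsupp.single (p - 1) (projWt A p a)

/-- A module over the twisted Lie superalgebra `V[g]`: mode actions with the
correct support, truncation, vacuum normalization and the (super) commutator
formula, but without the full twisted Jacobi identity. -/
structure LieRep (A : VOSA V) (g : VOSA.Aut A) (T₀ : ℕ) (M : Type)
    [AddCommGroup M] [Module ℂ M] where
  act : V → ℚ → M →ₗ[ℂ] M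
  supp : ∀ (r : ℕ), r < T₀ → ∀ u ∈ eigSp g.g T₀ r, ∀ n : ℚ,
    (¬ ∃ m : ℤ, n = (m : ℚ) + (r : ℚ) / T₀) → act u n = 0
  trunc : ∀ (u : V) (w : M), ∃ N : ℚ, ∀ n ≥ N, act u n w = 0
  vac_act : ∀ n : ℚ, act A.vac n = if n = -1 then LinearMap.id else 0
  comm : ∀ (p q : ℚ) (u v : V), u ∈ A.wtSpace p → v ∈ A.wtSpace q →
    ∀ (m n : ℚ) (w : M),
      act u m (act v n w) - epsQ p q • act v n (act u m w) =
      ∑ᶠ i : ℕ, ((qchoose m i : ℚ) : ℂ) • act (A.Y u (i : ℤ) v) (m + n - (i : ℚ)) w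

/-- A submodule invariant under all `V[g]`-mode actions. -/
def LieRep.Invariant {A : VOSA V} {g : VOSA.Aut A} {T₀ : ℕ} {M : Type}
    [AddCommGroup M] [Module ℂ M] (W : LieRep A g T₀ M) (N : Submodule ℂ M) : Prop :=
  ∀ (u : V) (m : ℚ), ∀ w ∈ N, W.act u m w ∈ N

/-- Mode form of the twisted associativity relation
`(z₀+z₂)^K Y(a,z₀+z₂)Y(b,z₂)u = (z₂+z₀)^K Y(Y(a,z₀)b,z₂)u`. -/
def AssocRel (A : VOSA V) {g : VOSA.Aut A} {T₀ : ℕ} {M : Type}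
    [AddCommGroup M] [Module ℂ M] (W : LieRep A g T₀ M) (K : ℚ) (a b : V) (u : M) : Prop :=
  ∀ (d : ℤ) (ν : ℚ),
    ∑ᶠ i : ℕ, ((qchoose K i : ℚ) : ℂ) • W.act a (K + (d : ℚ) - (i : ℚ)) (W.act b ((i : ℚ) + ν) u) =
    ∑ᶠ i : ℕ, ((qchoose K i : ℚ) : ℂ) • W.act (A.Y a ((i : ℤ) + d) b) (K - (i : ℚ) + ν) u


namespace Stmt4Aux

variable {V : Type} [AddCommGroup V] [Module ℂ V]

lemma circG_vac (A : VOSA V) (T r : ℕ) (hr : r ≠ 0) (p : ℚ) (u : V) :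
    circGElem A T r p u A.vac = u := by
  unfold circGElem
  rw [finsum_eq_single _ 0]
  · have h0 : ((0:ℕ):ℤ) - 1 - (if r = 0 then 1 else 0) = -1 := by
      rw [if_neg hr]; norm_num
    rw [h0, A.creation u]
    simp [qchoose]
  · intro i hi
    rw [if_neg hr, A.creation' u _ (by omega), smul_zero]

lemma mem_wtSpace_of_L0 (A : VOSA V) (p : ℚ) (b : V)
    (hb : A.Y A.ω 1 b = ((p : ℚ) : ℂ) • b) : b ∈ A.wtSpace p := by
  classical
  set cl := DirectSum.coeLinearMap A.wtSpace with hcl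
  have hbij := A.grading
  set c : ⨁ q : ℚ, A.wtSpace q := (LinearEquiv.ofBijective cl hbij).symm b with hc
  have hcb : cl c = b := by
    have := (LinearEquiv.ofBijective cl hbij).apply_symm_apply b
    exact this
  set Lm : (⨁ q : ℚ, A.wtSpace q) →ₗ[ℂ] ⨁ q : ℚ, A.wtSpace q :=
    DFinsupp.mapRange.linearMap
      (fun q => ((q : ℂ) • LinearMap.id : A.wtSpace q →ₗ[ℂ] A.wtSpace q)) with hLm
  have hLmapp : ∀ (c : ⨁ q : ℚ, A.wtSpace q) (q : ℚ), (Lm c) q = (q : ℂ) • (c q) :=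
    fun c q => DFinsupp.mapRange_apply _ (fun i => by simp) c q
  have hkey : cl ∘ₗ Lm = (A.Y A.ω 1) ∘ₗ cl := by
    apply DirectSum.linearMap_ext
    intro q
    ext x
    simp only [LinearMap.comp_apply]
    rw [DirectSum.lof_eq_of]
    have h1 : Lm (DirectSum.of (fun q => ↥(A.wtSpace q)) q x)
        = DirectSum.of (fun q => ↥(A.wtSpace q)) q ((q : ℂ) • x) := by
      apply DFinsupp.ext
      intro i
      rw [hLmapp]
      by_cases h : i = q
      · subst h
        rw [DirectSum.of_eq_same, DirectSum.of_eq_same]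
      · rw [DirectSum.of_eq_of_ne _ _ _ h, DirectSum.of_eq_of_ne _ _ _ h,
          smul_zero]
    rw [h1, hcl, DirectSum.coeLinearMap_of, DirectSum.coeLinearMap_of]
    rw [A.L0_grading q (x : V) x.2]
    rfl
  have h2 : cl (Lm c) = cl (((p : ℚ) : ℂ) • c) := by
    have := LinearMap.congr_fun hkey c
    simp only [LinearMap.comp_apply] at this
    rw [this, hcb, hb, map_smul, hcb]
  have h3 : Lm c = ((p : ℚ) : ℂ) • c := hbij.injective h2
  have h4 : ∀ q : ℚ, q ≠ p → c q = 0 := by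
    intro q hq
    have hcomp : ((q : ℂ)) • c q = ((p : ℚ) : ℂ) • c q := by
      have h5 := DFinsupp.ext_iff.mp h3 q
      rw [hLmapp] at h5
      exact h5.trans (DirectSum.smul_apply _ _ _)
    have hsub : (((q : ℚ) : ℂ) - ((p : ℚ) : ℂ)) • c q = 0 := by
      rw [sub_smul, sub_eq_zero]
      exact hcomp
    have hne : (((q : ℚ) : ℂ) - ((p : ℚ) : ℂ)) ≠ 0 := by
      rw [sub_ne_zero]
      exact_mod_cast fun h => hq (by exact_mod_cast h)
    exact (smul_eq_zero.mp hsub).resolve_left hne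
  have hc_of : c = DirectSum.of (fun q => ↥(A.wtSpace q)) p (c p) := by
    apply DFinsupp.ext
    intro q
    by_cases h : q = p
    · subst h; rw [DirectSum.of_eq_same]
    · rw [h4 q h, DirectSum.of_eq_of_ne _ _ _ h]
  rw [← hcb, hc_of, hcl, DirectSum.coeLinearMap_of]
  exact (c p).2

lemma aut_wt (A : VOSA V) (t : VOSA.Aut A) (p : ℚ) (a : V) (ha : a ∈ A.wtSpace p) :
    t.g a ∈ A.wtSpace p := by
  apply mem_wtSpace_of_L0
  have h := t.equivariant A.ω 1 a
  rw [t.fix_omega] at h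
  rw [← h, A.L0_grading p a ha, map_smul]

/-- `e^{2πir/T}`. -/
def lam (T r : ℕ) : ℂ := Complex.exp (2 * Real.pi * Complex.I * r / T)

lemma lam_ne_zero (T r : ℕ) : lam T r ≠ 0 := Complex.exp_ne_zero _

lemma lam_pow_T (T r : ℕ) (hT : T ≠ 0) : lam T r ^ T = 1 := by
  rw [lam, ← Complex.exp_nat_mul]
  have h : (T : ℂ) * (2 * Real.pi * Complex.I * r / T) = ((r : ℤ) : ℂ) * (2 * Real.pi * Complex.I) := by
    have hT' : (T : ℂ) ≠ 0 := Nat.cast_ne_zero.mpr hT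
    field_simp
    norm_cast
  rw [h, Complex.exp_int_mul_two_pi_mul_I]

/-- the projection onto the `e^{2πir/T}`-eigenspace. -/
def piR (f : V ≃ₗ[ℂ] V) (T r : ℕ) (v : V) : V :=
  ((T : ℂ))⁻¹ • ∑ j ∈ Finset.range T, (lam T r)⁻¹ ^ j • (f ^ j) v

lemma pow_succ_apply (f : V ≃ₗ[ℂ] V) (j : ℕ) (v : V) :
    (f ^ (j + 1)) v = f ((f ^ j) v) := by rw [pow_succ']; rfl

lemma pow_one_apply (f : V ≃ₗ[ℂ] V) (v : V) : (f ^ (1:ℕ)) v = f v := by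
  rw [pow_one]

lemma piR_eig (f : V ≃ₗ[ℂ] V) (T r : ℕ) (hT : T ≠ 0) (hfT : f ^ T = 1) (v : V) :
    f (piR f T r v) = lam T r • piR f T r v := by
  set lm := lam T r with hlm
  have hml : lm * lm⁻¹ = 1 := mul_inv_cancel₀ (lam_ne_zero T r)
  set G : ℕ → V := fun j => (lm * lm⁻¹ ^ j) • (f ^ j) v with hG
  have hterm : ∀ j : ℕ, lm⁻¹ ^ j • f ((f ^ j) v) = G (j + 1) := by
    intro j
    rw [hG]
    simp only
    rw [pow_succ_apply]
    congr 1
    rw [pow_succ, ← mul_assoc, mul_comm lm (lm⁻¹ ^ j), mul_assoc, hml, mul_one]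
  have hGT : G T = lm • v := by
    rw [hG]
    simp only
    rw [hfT]
    have h1 : lm⁻¹ ^ T = 1 := by rw [inv_pow, lam_pow_T T r hT, inv_one]
    rw [h1, mul_one]
    rfl
  have hG0 : G 0 = lm • v := by simp [hG]
  have hsum : ∑ j ∈ Finset.range T, lm⁻¹ ^ j • f ((f ^ j) v)
      = ∑ j ∈ Finset.range T, G j := by
    rw [Finset.sum_congr rfl (fun j _ => hterm j)]
    have h1 := Finset.sum_range_succ' G T
    have h2 := Finset.sum_range_succ G T
    rw [h2] at h1
    rw [hGT, hG0] at h1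
    exact (add_right_cancel h1).symm
  unfold piR
  rw [map_smul, map_sum]
  simp only [map_smul]
  rw [hsum, smul_comm]
  congr 1
  rw [Finset.smul_sum]
  refine Finset.sum_congr rfl fun j _ => ?_
  rw [hG, smul_smul]

lemma piR_mem_eigSp (f : V ≃ₗ[ℂ] V) (T r : ℕ) (hT : T ≠ 0) (hfT : f ^ T = 1) (v : V) :
    piR f T r v ∈ eigSp f T r := by
  rw [eigSp, Module.End.mem_eigenspace_iff]
  exact piR_eig f T r hT hfT v

lemma piR_fixed (f : V ≃ₗ[ℂ] V) (T r : ℕ) (hT : T ≠ 0) (u : V)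
    (hu : f u = lam T r • u) : piR f T r u = u := by
  have hpow : ∀ j : ℕ, (f ^ j) u = lam T r ^ j • u := by
    intro j
    induction j with
    | zero => simp
    | succ n ih =>
      rw [pow_succ_apply, ih, map_smul, hu, smul_smul, pow_succ, mul_comm]
  unfold piR
  have hterm : ∀ j ∈ Finset.range T, (lam T r)⁻¹ ^ j • (f ^ j) u = u := by
    intro j _
    rw [hpow j, smul_smul, ← mul_pow, inv_mul_cancel₀ (lam_ne_zero T r), one_pow, one_smul]
  rw [Finset.sum_congr rfl hterm, Finset.sum_const, Finset.card_range,
    ← Nat.cast_smul_eq_nsmul ℂ, smul_smul, inv_mul_cancel₀ (Nat.cast_ne_zero.mpr hT), one_smul]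

lemma piR_sum (f : V ≃ₗ[ℂ] V) (T : ℕ) (hT : T ≠ 0) (hfT : f ^ T = 1) (v : V) :
    ∑ r ∈ Finset.range T, piR f T r v = v := by
  set ζ := Complex.exp (2 * Real.pi * Complex.I / T) with hζdef
  have hζ : IsPrimitiveRoot ζ T := Complex.isPrimitiveRoot_exp T hT
  have hlam : ∀ r : ℕ, lam T r = ζ ^ r := by
    intro r
    rw [lam, hζdef, ← Complex.exp_nat_mul]
    congr 1
    push_cast
    ring
  unfold piR
  rw [← Finset.smul_sum, Finset.sum_comm]
  have hterm : ∀ j ∈ Finset.range T,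
      ∑ r ∈ Finset.range T, (lam T r)⁻¹ ^ j • (f ^ j) v
      = (if j = 0 then (T : ℂ) else 0) • (f ^ j) v := by
    intro j hj
    rw [← Finset.sum_smul]
    congr 1
    have hx : ∀ r : ℕ, (lam T r)⁻¹ ^ j = ((ζ⁻¹) ^ j) ^ r := by
      intro r
      rw [hlam, ← inv_pow, ← pow_mul, ← pow_mul, Nat.mul_comm]
    rw [Finset.sum_congr rfl (fun r _ => hx r)]
    by_cases h0 : j = 0
    · subst h0
      simp
    · rw [if_neg h0, geom_sum_eq, ← pow_mul, Nat.mul_comm, pow_mul, inv_pow,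
        hζ.pow_eq_one, inv_one, one_pow]
      · simp
      · exact hζ.inv.pow_ne_one_of_pos_of_lt h0 (Finset.mem_range.1 hj)
  rw [Finset.sum_congr rfl hterm, Finset.sum_eq_single 0]
  · have hif : (if (0:ℕ) = 0 then (T:ℂ) else 0) = (T:ℂ) := if_pos rfl
    rw [hif, pow_zero, smul_smul,
      inv_mul_cancel₀ (Nat.cast_ne_zero.mpr hT : (T:ℂ) ≠ 0), one_smul]
    rfl
  · intro b _ hb
    rw [if_neg hb, zero_smul]
  · intro h
    exact absurd (Finset.mem_range.2 (Nat.pos_of_ne_zero hT)) h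

lemma piR_zero (f : V ≃ₗ[ℂ] V) (T r : ℕ) : piR f T r 0 = 0 := by
  simp [piR]

lemma piR_add (f : V ≃ₗ[ℂ] V) (T r : ℕ) (x y : V) :
    piR f T r (x + y) = piR f T r x + piR f T r y := by
  unfold piR
  rw [← smul_add, ← Finset.sum_add_distrib]
  congr 1
  refine Finset.sum_congr rfl fun j _ => ?_
  rw [map_add, smul_add]

lemma piR_wt (A : VOSA V) (f : V ≃ₗ[ℂ] V)
    (hfw : ∀ p : ℚ, ∀ a ∈ A.wtSpace p, f a ∈ A.wtSpace p)
    (T r : ℕ) (p : ℚ) (v : V) (hv : v ∈ A.wtSpace p) : piR f T r v ∈ A.wtSpace p := by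
  apply Submodule.smul_mem
  apply Submodule.sum_mem
  intro j hj
  clear hj
  apply Submodule.smul_mem
  induction j with
  | zero => simpa using hv
  | succ n ih =>
    rw [pow_succ_apply]
    exact hfw p _ ih

lemma piR_mem_Og (A : VOSA V) (f : V ≃ₗ[ℂ] V) (T r : ℕ) (hT : T ≠ 0) (hfT : f ^ T = 1)
    (hfw : ∀ p : ℚ, ∀ a ∈ A.wtSpace p, f a ∈ A.wtSpace p)
    (hr0 : r ≠ 0) (hrT : r < T) (v : V) : piR f T r v ∈ Og A f T := by
  have hv : v ∈ ⨆ q : ℚ, A.wtSpace q := by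
    rw [A.grading.submodule_iSup_eq_top]
    trivial
  refine Submodule.iSup_induction (motive := fun y => piR f T r y ∈ Og A f T)
    (fun q : ℚ => A.wtSpace q) hv ?_ ?_ ?_
  · intro q x hx
    apply Submodule.subset_span
    exact ⟨r, q, piR f T r x, A.vac, hrT, piR_mem_eigSp f T r hT hfT x,
      piR_wt A f hfw T r q x hx, (circG_vac A T r hr0 q _).symm⟩
  · show piR f T r 0 ∈ Og A f T
    rw [piR_zero]
    exact Submodule.zero_mem _
  · intro x y hx hy
    rw [piR_add]
    exact Submodule.add_mem _ hx hy

end Stmt4Aux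

/-- If `r ≠ 0` then `V^{r*} ⊆ O_g(V)`; hence `A_g(V) = V/O_g(V)` is
a quotient of `V^{0*}/(O_g(V) ∩ V^{0*})`, i.e. the composite
`V^{0*} → V → V/O_g(V)` is surjective. -/
theorem stmt4 (A : VOSA V) (g s : VOSA.Aut A) (hs : A.IsParityAut s) (T : ℕ)
    (hT : orderOf (g.g.trans s.g) = T) (h1 : 0 < T) :
    (∀ r : ℕ, 0 < r → r < T → eigSp (g.g.trans s.g) T r ≤ Og A (g.g.trans s.g) T) ∧
    Function.Surjective
      ((Og A (g.g.trans s.g) T).mkQ ∘ₗ (eigSp (g.g.trans s.g) T 0).subtype) := by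
  classical
  set f := g.g.trans s.g with hf
  have hT0 : T ≠ 0 := h1.ne'
  have hfT : f ^ T = 1 := hT ▸ pow_orderOf_eq_one f
  have hfw : ∀ p : ℚ, ∀ a ∈ A.wtSpace p, f a ∈ A.wtSpace p := by
    intro p a ha
    have h2 : s.g (g.g a) ∈ A.wtSpace p :=
      Stmt4Aux.aut_wt A s p _ (Stmt4Aux.aut_wt A g p a ha)
    simpa [hf] using h2
  have part1 : ∀ r : ℕ, 0 < r → r < T → eigSp f T r ≤ Og A f T := by
    intro r hr hrT u hu
    have hu' : f u = Stmt4Aux.lam T r • u := by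
      rw [eigSp, Module.End.mem_eigenspace_iff] at hu
      exact hu
    rw [← Stmt4Aux.piR_fixed f T r hT0 u hu']
    exact Stmt4Aux.piR_mem_Og A f T r hT0 hfT hfw hr.ne' hrT u
  refine ⟨part1, ?_⟩
  intro x
  obtain ⟨v, rfl⟩ := Submodule.mkQ_surjective _ x
  refine ⟨⟨Stmt4Aux.piR f T 0 v, Stmt4Aux.piR_mem_eigSp f T 0 hT0 hfT v⟩, ?_⟩
  simp only [LinearMap.coe_comp, Function.comp_apply, Submodule.coe_subtype,
    Submodule.mkQ_apply]
  rw [Submodule.Quotient.eq]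
  have hsum := Stmt4Aux.piR_sum f T hT0 hfT v
  have h0in : (0 : ℕ) ∈ Finset.range T := Finset.mem_range.2 h1
  rw [← Finset.add_sum_erase _ _ h0in] at hsum
  have hdiff : Stmt4Aux.piR f T 0 v - v
      = -(∑ r ∈ (Finset.range T).erase 0, Stmt4Aux.piR f T r v) := by
    rw [eq_neg_iff_add_eq_zero, sub_add_eq_add_sub, sub_eq_zero]
    exact hsum
  rw [hdiff]
  apply Submodule.neg_mem
  apply Submodule.sum_mem
  intro r hr
  obtain ⟨hr0, hrT⟩ := Finset.mem_erase.1 hr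
  exact part1 r (Nat.pos_of_ne_zero hr0) (Finset.mem_range.1 hrT)
    (Stmt4Aux.piR_mem_eigSp f T r hT0 hfT v)
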